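/- There exists a constant C > 0 such that for all real numbers a ≥ 1 and R ≥ 1, one has | ∑_{n ∈ ℤ², |n| ≤ R} 1/(a + |n|²) − π·log(1 + R²/a) | ≤ (C/√a)·min(1, R/√a). -/

import Mathlib

open scoped Real
open Finset

namespace LatticeAux


noncomputable def disk (K : ℕ) : Finset (ℤ × ℤ) :=
  (Finset.Icc (-(K:ℤ)) K ×ˢ Finset.Icc (-(K:ℤ)) K).filter fun n => n.1^2 + n.2^2 ≤ (K:ℤ)

noncomputable def shell (k : ℕ) : Finset (ℤ × ℤ) :=
  (Finset.Icc (-(k:ℤ)) k ×ˢ Finset.Icc (-(k:ℤ)) k).filter fun n => n.1^2 + n.2^2 = (k:ℤ)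

lemma mem_disk {K : ℕ} {n : ℤ × ℤ} : n ∈ disk K ↔ n.1^2 + n.2^2 ≤ (K:ℤ) := by
  simp only [disk, Finset.mem_filter, Finset.mem_product, Finset.mem_Icc]
  constructor
  · tauto
  · intro h
    refine ⟨⟨⟨?_, ?_⟩, ?_, ?_⟩, h⟩ <;>
      nlinarith [sq_nonneg n.1, sq_nonneg n.2, sq_nonneg (n.1-1), sq_nonneg (n.1+1),
        sq_nonneg (n.2-1), sq_nonneg (n.2+1)]

lemma mem_shell {k : ℕ} {n : ℤ × ℤ} : n ∈ shell k ↔ n.1^2 + n.2^2 = (k:ℤ) := by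
  simp only [shell, Finset.mem_filter, Finset.mem_product, Finset.mem_Icc]
  constructor
  · tauto
  · intro h
    refine ⟨⟨⟨?_, ?_⟩, ?_, ?_⟩, h⟩ <;>
      nlinarith [sq_nonneg n.1, sq_nonneg n.2, sq_nonneg (n.1-1), sq_nonneg (n.1+1),
        sq_nonneg (n.2-1), sq_nonneg (n.2+1)]

lemma disk_fiber {K k : ℕ} (hk : k ≤ K) :
    (disk K).filter (fun n => (n.1^2 + n.2^2).toNat = k) = shell k := by
  ext n
  simp only [Finset.mem_filter, mem_disk, mem_shell]
  constructor
  · rintro ⟨h1, h2⟩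
    have h0 : (0:ℤ) ≤ n.1^2 + n.2^2 := by positivity
    omega
  · intro h
    have h0 : (0:ℤ) ≤ n.1^2 + n.2^2 := by positivity
    constructor
    · omega
    · omega

lemma disk_card (K : ℕ) : (disk K).card = ∑ k ∈ range (K+1), (shell k).card := by
  rw [Finset.card_eq_sum_card_fiberwise (f := fun n => (n.1^2 + n.2^2).toNat)
    (t := range (K+1))]
  · refine Finset.sum_congr rfl fun k hk => ?_
    rw [disk_fiber (by simpa using Nat.lt_succ_iff.mp (Finset.mem_range.mp hk))]
  · intro n hn
    have := mem_disk.mp hn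
    have h0 : (0:ℤ) ≤ n.1^2 + n.2^2 := by positivity
    simp only [Finset.coe_range, Set.mem_Iio, Finset.mem_range]
    omega



lemma col_eq {K : ℕ} {j : ℤ} (hj : j^2 ≤ (K:ℤ)) :
    (Finset.Icc (-(K:ℤ)) K).filter (fun y => j^2 + y^2 ≤ (K:ℤ))
      = Finset.Icc (-(Nat.sqrt ((K:ℤ) - j^2).toNat : ℤ)) (Nat.sqrt ((K:ℤ) - j^2).toNat) := by
  set m : ℕ := ((K:ℤ) - j^2).toNat with hm
  set t : ℕ := Nat.sqrt m with ht
  have hmK : (m : ℤ) = (K:ℤ) - j^2 := by omega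
  have ht2 : (t:ℤ)^2 ≤ (m:ℤ) := by
    have := Nat.sqrt_le' m
    rw [ht]
    push_cast
    nlinarith [this]
  have htK : (t:ℤ) ≤ (K:ℤ) := by nlinarith [sq_nonneg ((t:ℤ) - 1), sq_nonneg (j:ℤ)]
  ext y
  simp only [Finset.mem_filter, Finset.mem_Icc]
  constructor
  · rintro ⟨⟨h1, h2⟩, h3⟩
    have hy : y^2 ≤ (m:ℤ) := by omega
    have hy' : y.natAbs * y.natAbs ≤ m := by
      have h5 : (y.natAbs : ℤ) * y.natAbs ≤ (m:ℤ) := by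
        rw [Int.natAbs_mul_self']; nlinarith
      exact_mod_cast h5
    have hy'' : y.natAbs ≤ t := Nat.le_sqrt.mpr hy'
    omega
  · rintro ⟨h1, h2⟩
    have hy : y^2 ≤ (t:ℤ)^2 := by nlinarith
    exact ⟨⟨by omega, by omega⟩, by omega⟩

lemma col_card {K : ℕ} {j : ℤ} (hj : j^2 ≤ (K:ℤ)) :
    ((Finset.Icc (-(K:ℤ)) K).filter (fun y => j^2 + y^2 ≤ (K:ℤ))).card
      = 2 * Nat.sqrt ((K:ℤ) - j^2).toNat + 1 := by
  rw [col_eq hj, Int.card_Icc]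
  omega

lemma col_empty {K : ℕ} {j : ℤ} (hj : ¬ j^2 ≤ (K:ℤ)) :
    (Finset.Icc (-(K:ℤ)) K).filter (fun y => j^2 + y^2 ≤ (K:ℤ)) = ∅ := by
  rw [Finset.filter_eq_empty_iff]
  intro y _
  nlinarith [sq_nonneg y]

lemma disk_card_cols (K : ℕ) :
    (disk K).card = ∑ j ∈ Finset.Icc (-(Nat.sqrt K : ℤ)) (Nat.sqrt K),
      (2 * Nat.sqrt ((K:ℤ) - j^2).toNat + 1) := by
  have hsub : Finset.Icc (-(Nat.sqrt K : ℤ)) (Nat.sqrt K) ⊆ Finset.Icc (-(K:ℤ)) K := by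
    apply Finset.Icc_subset_Icc <;>
      · have := Nat.sqrt_le_self K; push_cast; omega
  rw [Finset.card_eq_sum_card_fiberwise (f := Prod.fst) (t := Finset.Icc (-(K:ℤ)) K)]
  · rw [← Finset.sum_subset hsub]
    · refine Finset.sum_congr rfl fun j hj => ?_
      have hj2 : j^2 ≤ (K:ℤ) := by
        simp only [Finset.mem_Icc] at hj
        have h1 : j.natAbs ≤ Nat.sqrt K := by omega
        have h2 : j.natAbs * j.natAbs ≤ K := Nat.le_sqrt.mp h1
        have h3 : (j.natAbs : ℤ) * j.natAbs ≤ (K:ℤ) := by exact_mod_cast h2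
        rw [Int.natAbs_mul_self'] at h3
        nlinarith
      rw [← col_card hj2]
      apply Finset.card_bij (fun n _ => n.2)
      · rintro ⟨x, y⟩ hn
        simp only [Finset.mem_filter, mem_disk] at hn ⊢
        obtain ⟨h1, h2⟩ := hn
        subst h2
        refine ⟨?_, by nlinarith⟩
        simp only [Finset.mem_Icc]
        constructor <;> nlinarith [sq_nonneg (y-1), sq_nonneg (y+1), sq_nonneg x]
      · rintro ⟨x1, y1⟩ h1 ⟨x2, y2⟩ h2 h
        simp only [Finset.mem_filter] at h1 h2
        have e1 : x1 = j := h1.2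
        have e2 : x2 = j := h2.2
        have h' : y1 = y2 := h
        simp [e1, e2, h']
      · intro y hy
        simp only [Finset.mem_filter, Finset.mem_Icc] at hy
        refine ⟨(j, y), ?_, rfl⟩
        simp only [Finset.mem_filter, mem_disk]
        exact ⟨hy.2, trivial⟩
    · intro j hjK hj
      have hj2 : ¬ j^2 ≤ (K:ℤ) := by
        simp only [Finset.mem_Icc] at hj hjK
        intro hc
        have : j.natAbs * j.natAbs ≤ K := by
          have : (j.natAbs : ℤ) * j.natAbs ≤ (K:ℤ) := by rw [Int.natAbs_mul_self']; nlinarith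
          exact_mod_cast this
        have := Nat.le_sqrt.mpr this
        omega
      have : (disk K).filter (fun n => n.1 = j) = ∅ := by
        rw [Finset.filter_eq_empty_iff]
        intro n hn
        have := mem_disk.mp hn
        intro h; subst h
        nlinarith [sq_nonneg n.2]
      simp [this]
  · intro n hn
    have h := mem_disk.mp hn
    simp only [Finset.coe_Icc, Set.mem_Icc]
    constructor <;> nlinarith [sq_nonneg (n.1-1), sq_nonneg (n.1+1), sq_nonneg n.2]


lemma nat_sqrt_le_real (m : ℕ) : (Nat.sqrt m : ℝ) ≤ Real.sqrt m := by
  have h : ((Nat.sqrt m : ℝ))^2 ≤ (m:ℝ) := by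
    exact_mod_cast Nat.sqrt_le' m
  calc (Nat.sqrt m : ℝ) = Real.sqrt ((Nat.sqrt m:ℝ)^2) := (Real.sqrt_sq (by positivity)).symm
  _ ≤ Real.sqrt m := Real.sqrt_le_sqrt h

lemma real_sqrt_le_nat (m : ℕ) : Real.sqrt m ≤ (Nat.sqrt m : ℝ) + 1 := by
  have h : (m:ℝ) ≤ ((Nat.sqrt m : ℝ) + 1)^2 := by
    have h0 : m ≤ (Nat.sqrt m + 1)^2 := by
      simpa [Nat.succ_eq_add_one] using (Nat.lt_succ_sqrt' m).le
    exact_mod_cast h0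
  calc Real.sqrt m ≤ Real.sqrt (((Nat.sqrt m:ℝ)+1)^2) := Real.sqrt_le_sqrt h
  _ = _ := Real.sqrt_sq (by positivity)

lemma integral_sqrt_quarter : ∫ x in (0:ℝ)..1, Real.sqrt (1 - x^2) = π/4 := by
  have h := integral_sqrt_one_sub_sq
  have hneg : ∫ x in (0:ℝ)..1, Real.sqrt (1 - x^2) = ∫ x in (-1:ℝ)..0, Real.sqrt (1 - x^2) := by
    have h2 := intervalIntegral.integral_comp_neg (a := (0:ℝ)) (b := 1)
      (f := fun x => Real.sqrt (1 - x^2))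
    simp only [neg_sq] at h2
    norm_num at h2
    exact h2
  have hcont : Continuous fun x : ℝ => Real.sqrt (1 - x^2) := by continuity
  have hadd := intervalIntegral.integral_add_adjacent_intervals (μ := MeasureTheory.volume) (a := (-1:ℝ)) (b := 0) (c := 1)
    (hcont.intervalIntegrable _ _) (hcont.intervalIntegrable _ _)
  rw [h] at hadd
  linarith [hadd, hneg]

lemma integral_F (K : ℕ) (hK : 1 ≤ K) :
    ∫ x in (0:ℝ)..(Real.sqrt K), 2 * Real.sqrt ((K:ℝ) - x^2) = π * K / 2 := by
  have hK0 : (0:ℝ) ≤ K := by positivity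
  set c := Real.sqrt (K:ℝ) with hc
  have hc2 : c^2 = K := Real.sq_sqrt hK0
  have key : ∀ x : ℝ, 2 * Real.sqrt ((K:ℝ) - (c*x)^2) = (2*c) * Real.sqrt (1 - x^2) := by
    intro x
    have h3 : (K:ℝ) - (c*x)^2 = (K:ℝ) * (1 - x^2) := by rw [mul_pow, hc2]; ring
    rw [h3, Real.sqrt_mul hK0, ← hc]; ring
  have h1 := intervalIntegral.smul_integral_comp_mul_left
    (f := fun x => 2 * Real.sqrt ((K:ℝ) - x^2)) (a := (0:ℝ)) (b := 1) c
  rw [mul_zero, mul_one] at h1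
  rw [← h1]
  simp only [key]
  rw [intervalIntegral.integral_const_mul, integral_sqrt_quarter, smul_eq_mul]
  linear_combination (π/2) * hc2

lemma F_antitone (K : ℕ) : AntitoneOn (fun x : ℝ => 2 * Real.sqrt ((K:ℝ) - x^2)) (Set.Ici 0) := by
  intro x hx y hy hxy
  simp only [Set.mem_Ici] at hx hy
  have h : (K:ℝ) - y^2 ≤ (K:ℝ) - x^2 := by nlinarith
  have h2 := Real.sqrt_le_sqrt h
  show 2 * Real.sqrt ((K:ℝ) - y^2) ≤ 2 * Real.sqrt ((K:ℝ) - x^2)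
  linarith

lemma gauss_sum_integral (K : ℕ) (hK : 1 ≤ K) :
    |(∑ i ∈ range (Nat.sqrt K + 1), 2 * Real.sqrt ((K:ℝ) - (i:ℝ)^2))
      - π * K / 2| ≤ 2 * Real.sqrt K := by
  set s := Nat.sqrt K with hs
  set F : ℝ → ℝ := fun x => 2 * Real.sqrt ((K:ℝ) - x^2) with hF
  have hcont : Continuous F := by rw [hF]; continuity
  have hFnn : ∀ x : ℝ, 0 ≤ F x := fun x => by rw [hF]; positivity
  have hsK : (s:ℝ) ≤ Real.sqrt K := by
    rw [hs]; exact nat_sqrt_le_real K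
  have hKs : Real.sqrt K ≤ (s:ℝ) + 1 := by
    rw [hs]; exact real_sqrt_le_nat K
  have hsqK1 : (1:ℝ) ≤ Real.sqrt K := by
    rw [show (1:ℝ) = Real.sqrt 1 by simp]
    exact Real.sqrt_le_sqrt (by exact_mod_cast hK)
  -- lower bound: π K / 2 ≤ Σ
  have hlow : π * K / 2 ≤ ∑ i ∈ range (s+1), F i := by
    have h1 := AntitoneOn.integral_le_sum (x₀ := 0) (a := s+1) (f := F)
      ((F_antitone K).mono (by
        intro x hx
        simp only [Set.mem_Icc] at hx
        exact hx.1))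
    have h2 : ∫ x in (0:ℝ)..(0 + (s+1:ℕ)), F x
        = (∫ x in (0:ℝ)..(Real.sqrt K), F x) + ∫ x in (Real.sqrt K)..(0 + (s+1:ℕ)), F x := by
      rw [intervalIntegral.integral_add_adjacent_intervals (μ := MeasureTheory.volume)
        (hcont.intervalIntegrable _ _) (hcont.intervalIntegrable _ _)]
    have h3 : 0 ≤ ∫ x in (Real.sqrt K)..(0 + (s+1:ℕ)), F x := by
      apply intervalIntegral.integral_nonneg
      · push_cast; linarith
      · intro u _; exact hFnn u
    have h4 : ∫ x in (0:ℝ)..(Real.sqrt K), F x = π * K / 2 := integral_F K hK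
    have h5 : ∑ i ∈ range (s+1), F (0 + (i:ℕ)) = ∑ i ∈ range (s+1), F i := by
      refine Finset.sum_congr rfl fun i _ => by rw [zero_add]
    rw [h2, h4, h5] at h1
    linarith
  -- upper bound: Σ ≤ π K / 2 + 2 sqrt K
  have hup : ∑ i ∈ range (s+1), F i ≤ π * K / 2 + 2 * Real.sqrt K := by
    have hsplit : ∑ i ∈ range (s+1), F i = (∑ i ∈ range s, F ((i:ℕ)+1)) + F 0 := by
      rw [Finset.sum_range_succ' (fun i => F (i:ℕ)) s]
      simp only [Nat.cast_add, Nat.cast_one, Nat.cast_zero]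
    have h1 := AntitoneOn.sum_le_integral (x₀ := 0) (a := s) (f := F)
      ((F_antitone K).mono (by
        intro x hx
        simp only [Set.mem_Icc] at hx
        exact hx.1))
    have h2 : ∫ x in (0:ℝ)..(Real.sqrt K), F x
        = (∫ x in (0:ℝ)..((0:ℝ) + (s:ℕ)), F x) + ∫ x in ((0:ℝ) + (s:ℕ))..(Real.sqrt K), F x := by
      rw [intervalIntegral.integral_add_adjacent_intervals (μ := MeasureTheory.volume)
        (hcont.intervalIntegrable _ _) (hcont.intervalIntegrable _ _)]
    have h3 : 0 ≤ ∫ x in ((0:ℝ) + (s:ℕ))..(Real.sqrt K), F x := by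
      apply intervalIntegral.integral_nonneg
      · push_cast; linarith
      · intro u _; exact hFnn u
    have h4 : ∫ x in (0:ℝ)..(Real.sqrt K), F x = π * K / 2 := integral_F K hK
    have h5 : ∑ i ∈ range s, F (0 + ((i:ℕ) + 1:ℕ)) = ∑ i ∈ range s, F ((i:ℕ)+1) := by
      refine Finset.sum_congr rfl fun i _ => by
        simp only [Nat.cast_add, Nat.cast_one, zero_add]
    have hF0 : F 0 = 2 * Real.sqrt K := by rw [hF]; norm_num
    rw [h5] at h1
    have h6 : (∫ x in (0:ℝ)..((0:ℝ) + (s:ℕ)), F x) ≤ π * K / 2 := by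
      rw [h4] at h2; linarith
    linarith [hsplit, h1, h6, hF0.le]
  rw [abs_sub_le_iff]
  constructor <;> linarith

lemma sum_Icc_neg_even (g : ℤ → ℝ) (hg : ∀ j : ℤ, g (-j) = g j) (s : ℕ) :
    ∑ j ∈ Finset.Icc (-(s:ℤ)) s, g j = 2 * (∑ i ∈ range (s+1), g (i:ℤ)) - g 0 := by
  induction s with
  | zero => simp; ring
  | succ s ih =>
    have hIcc : Finset.Icc (-(s+1:ℕ):ℤ) ((s+1:ℕ):ℤ)
        = insert (-(s:ℤ)-1) (insert ((s:ℤ)+1) (Finset.Icc (-(s:ℤ)) s)) := by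
      ext j
      simp only [Finset.mem_Icc, Finset.mem_insert]
      push_cast
      omega
    have hn1 : ((s:ℤ)+1) ∉ Finset.Icc (-(s:ℤ)) s := by
      simp only [Finset.mem_Icc]; omega
    have hn2 : (-(s:ℤ)-1) ∉ insert ((s:ℤ)+1) (Finset.Icc (-(s:ℤ)) s) := by
      simp only [Finset.mem_insert, Finset.mem_Icc]; omega
    have he : g (-(s:ℤ)-1) = g ((s:ℤ)+1) := by
      rw [show (-(s:ℤ)-1) = -((s:ℤ)+1) by ring, hg]
    have hc : g ((s+1:ℕ):ℤ) = g ((s:ℤ)+1) := by push_cast; rfl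
    rw [hIcc, Finset.sum_insert hn2, Finset.sum_insert hn1, ih, he,
      Finset.sum_range_succ (fun i : ℕ => g (i:ℤ)) (s+1), hc]
    ring

lemma gauss (K : ℕ) (hK : 1 ≤ K) : |((disk K).card : ℝ) - π * K| ≤ 20 * Real.sqrt K := by
  set s := Nat.sqrt K with hs
  have hsqK1 : (1:ℝ) ≤ Real.sqrt K := by
    rw [show (1:ℝ) = Real.sqrt 1 by simp]
    exact Real.sqrt_le_sqrt (by exact_mod_cast hK)
  have hsK : (s:ℝ) ≤ Real.sqrt K := by rw [hs]; exact nat_sqrt_le_real K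
  have hcard : ((disk K).card : ℝ)
      = ∑ j ∈ Finset.Icc (-(s:ℤ)) s, ((2 * Nat.sqrt ((K:ℤ) - j^2).toNat + 1 : ℕ) : ℝ) := by
    rw [disk_card_cols K]
    push_cast
    rfl
  have hterm : ∀ j ∈ Finset.Icc (-(s:ℤ)) s,
      |((2 * Nat.sqrt ((K:ℤ) - j^2).toNat + 1 : ℕ) : ℝ)
        - (2 * Real.sqrt ((K:ℝ) - (j:ℝ)^2) + 1)| ≤ 2 := by
    intro j hj
    simp only [Finset.mem_Icc] at hj
    have hj2 : j^2 ≤ (K:ℤ) := by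
      have h1 : j.natAbs ≤ s := by omega
      have h2 : j.natAbs * j.natAbs ≤ K := Nat.le_sqrt.mp h1
      have h3 : (j.natAbs : ℤ) * j.natAbs ≤ (K:ℤ) := by exact_mod_cast h2
      rw [Int.natAbs_mul_self'] at h3
      nlinarith
    set m := ((K:ℤ) - j^2).toNat with hm
    have hmz : (m:ℤ) = (K:ℤ) - j^2 := by omega
    have hmr : (m:ℝ) = (K:ℝ) - (j:ℝ)^2 := by
      have h4 := congrArg (fun z : ℤ => (z:ℝ)) hmz
      push_cast at h4
      exact h4
    have h1 := nat_sqrt_le_real m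
    have h2 := real_sqrt_le_nat m
    rw [hmr] at h1 h2
    push_cast
    rw [abs_le]
    constructor <;> nlinarith
  have habs1 : |((disk K).card : ℝ)
      - ∑ j ∈ Finset.Icc (-(s:ℤ)) s, (2 * Real.sqrt ((K:ℝ) - (j:ℝ)^2) + 1)|
      ≤ 2 * (2*(s:ℝ)+1) := by
    rw [hcard, ← Finset.sum_sub_distrib]
    refine (Finset.abs_sum_le_sum_abs _ _).trans ?_
    refine (Finset.sum_le_sum hterm).trans ?_
    rw [Finset.sum_const, Int.card_Icc]
    have hcardIcc : ((s:ℤ) + 1 - -(s:ℤ)).toNat = 2*s+1 := by omega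
    rw [hcardIcc, nsmul_eq_mul]
    push_cast
    linarith
  have heven : ∑ j ∈ Finset.Icc (-(s:ℤ)) s, (2 * Real.sqrt ((K:ℝ) - (j:ℝ)^2))
      = 2 * (∑ i ∈ range (s+1), 2 * Real.sqrt ((K:ℝ) - (i:ℝ)^2)) - 2 * Real.sqrt K := by
    have := sum_Icc_neg_even (fun j : ℤ => 2 * Real.sqrt ((K:ℝ) - (j:ℝ)^2))
      (fun j => by push_cast; ring_nf) s
    rw [this]
    norm_num
  have hsplit : ∑ j ∈ Finset.Icc (-(s:ℤ)) s, (2 * Real.sqrt ((K:ℝ) - (j:ℝ)^2) + 1)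
      = (∑ j ∈ Finset.Icc (-(s:ℤ)) s, 2 * Real.sqrt ((K:ℝ) - (j:ℝ)^2)) + (2*(s:ℝ)+1) := by
    rw [Finset.sum_add_distrib, Finset.sum_const, Int.card_Icc]
    have hcardIcc : ((s:ℤ) + 1 - -(s:ℤ)).toNat = 2*s+1 := by omega
    rw [hcardIcc]
    push_cast
    ring
  have hgsi := gauss_sum_integral K hK
  rw [← hs] at hgsi
  have hA := abs_le.mp habs1
  have hB := abs_le.mp hgsi
  rw [hsplit, heven] at hA
  rw [abs_le]
  constructor <;> nlinarith [hA.1, hA.2, hB.1, hB.2, hsK, hsqK1]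

lemma abel_sum (c g : ℕ → ℝ) (M : ℕ) :
    ∑ k ∈ range (M+1), c k * g k
      = (∑ i ∈ range (M+1), c i) * g M
        + ∑ k ∈ range M, (∑ i ∈ range (k+1), c i) * (g k - g (k+1)) := by
  induction M with
  | zero => simp
  | succ M ih =>
    rw [Finset.sum_range_succ (fun k => c k * g k) (M+1), ih,
      Finset.sum_range_succ (fun k => (∑ i ∈ range (k+1), c i) * (g k - g (k+1))) M,
      Finset.sum_range_succ c (M+1)]
    ring

lemma tele_sum (g : ℕ → ℝ) (M : ℕ) :
    (M:ℝ) * g M + ∑ k ∈ range M, (k:ℝ) * (g k - g (k+1)) = ∑ k ∈ range M, g (k+1) := by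
  induction M with
  | zero => simp
  | succ M ih =>
    rw [Finset.sum_range_succ (fun k => (k:ℝ) * (g k - g (k+1))) M,
      Finset.sum_range_succ (fun k => g (k+1)) M]
    push_cast
    push_cast at ih
    linarith [ih]

lemma log_diff_le {x y : ℝ} (hx : 0 < x) (hxy : x ≤ y) :
    Real.log y - Real.log x ≤ (y - x) / x := by
  have hy : 0 < y := lt_of_lt_of_le hx hxy
  rw [← Real.log_div (ne_of_gt hy) (ne_of_gt hx)]
  have h1 := Real.log_le_sub_one_of_pos (div_pos hy hx)
  have h2 : y / x - 1 = (y - x)/x := by field_simp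
  linarith

lemma le_log_diff {x y : ℝ} (hx : 0 < x) (hxy : x ≤ y) :
    (y - x) / y ≤ Real.log y - Real.log x := by
  have hy : 0 < y := lt_of_lt_of_le hx hxy
  rw [← Real.log_div (ne_of_gt hy) (ne_of_gt hx)]
  have h1 := Real.one_sub_inv_le_log_of_pos (div_pos hy hx)
  have h2 : 1 - (y/x)⁻¹ = (y - x)/y := by
    rw [inv_div]
    field_simp
  linarith

lemma harmonic_log (a : ℝ) (ha : 1 ≤ a) (M : ℕ) :
    |∑ k ∈ range M, (a + (k:ℝ) + 1)⁻¹ - (Real.log (a + M) - Real.log a)| ≤ 1/a := by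
  have ha0 : 0 < a := by linarith
  have hlog : Real.log (a + M) - Real.log a
      = ∑ k ∈ range M, (Real.log (a + (k:ℝ) + 1) - Real.log (a + (k:ℝ))) := by
    have h := Finset.sum_range_sub (f := fun k : ℕ => Real.log (a + (k:ℝ))) M
    simp only [Nat.cast_zero, add_zero] at h
    rw [← h]
    refine Finset.sum_congr rfl fun k _ => ?_
    push_cast
    ring_nf
  have hlow : ∀ k ∈ range M,
      (a + (k:ℝ) + 1)⁻¹ ≤ Real.log (a + (k:ℝ) + 1) - Real.log (a + (k:ℝ)) := by
    intro k _
    have hk0 : (0:ℝ) ≤ (k:ℝ) := Nat.cast_nonneg k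
    have h := le_log_diff (x := a + (k:ℝ)) (y := a + (k:ℝ) + 1) (by linarith) (by linarith)
    rw [show a + (k:ℝ) + 1 - (a + (k:ℝ)) = 1 by ring, one_div] at h
    exact h
  have hup : ∀ k ∈ range M,
      Real.log (a + (k:ℝ) + 1) - Real.log (a + (k:ℝ)) ≤ (a + (k:ℝ))⁻¹ := by
    intro k _
    have hk0 : (0:ℝ) ≤ (k:ℝ) := Nat.cast_nonneg k
    have h := log_diff_le (x := a + (k:ℝ)) (y := a + (k:ℝ) + 1) (by linarith) (by linarith)
    rw [show a + (k:ℝ) + 1 - (a + (k:ℝ)) = 1 by ring, one_div] at h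
    exact h
  have h1 := Finset.sum_le_sum hlow
  have h2 := Finset.sum_le_sum hup
  have h3 : ∑ k ∈ range M, ((a + (k:ℝ))⁻¹ - (a + (k:ℝ) + 1)⁻¹) = a⁻¹ - (a + (M:ℝ))⁻¹ := by
    have h := Finset.sum_range_sub' (f := fun k : ℕ => (a + (k:ℝ))⁻¹) M
    simp only [Nat.cast_zero, add_zero] at h
    rw [← h]
    refine Finset.sum_congr rfl fun k _ => ?_
    push_cast
    ring_nf
  rw [Finset.sum_sub_distrib] at h3
  have h4 : (0:ℝ) < a + M := by positivity
  have h5 : (0:ℝ) ≤ (a + (M:ℝ))⁻¹ := by positivity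
  have hd : (1:ℝ)/a = a⁻¹ := one_div a
  rw [hlog, abs_le]
  constructor
  · linarith
  · linarith

lemma delta_eq (a : ℝ) (ha : 1 ≤ a) (k : ℕ) :
    (a + (k:ℝ))⁻¹ - (a + (k:ℝ) + 1)⁻¹ = ((a + (k:ℝ)) * (a + (k:ℝ) + 1))⁻¹ := by
  have hk0 : (0:ℝ) ≤ (k:ℝ) := Nat.cast_nonneg k
  have h1 : (0:ℝ) < a + k := by linarith
  have h2 : (0:ℝ) < a + k + 1 := by linarith
  field_simp
  ring

lemma sqrt_term_le (a : ℝ) (ha : 1 ≤ a) (k : ℕ) :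
    Real.sqrt k * ((a + (k:ℝ))⁻¹ - (a + (k:ℝ) + 1)⁻¹)
      ≤ 3 * ((Real.sqrt (a + (k:ℝ)))⁻¹ - (Real.sqrt (a + (k:ℝ) + 1))⁻¹) := by
  have hk0 : (0:ℝ) ≤ (k:ℝ) := Nat.cast_nonneg k
  set u := Real.sqrt (a + (k:ℝ)) with hu
  set v := Real.sqrt (a + (k:ℝ) + 1) with hv
  have hu2 : u^2 = a + k := Real.sq_sqrt (by linarith)
  have hv2 : v^2 = a + k + 1 := Real.sq_sqrt (by linarith)
  have hu1 : (1:ℝ) ≤ u := by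
    rw [hu, show (1:ℝ) = Real.sqrt 1 by simp]
    exact Real.sqrt_le_sqrt (by linarith)
  have huv : u ≤ v := by
    rw [hu, hv]
    exact Real.sqrt_le_sqrt (by linarith)
  have hupos : (0:ℝ) < u := by linarith
  have hvpos : (0:ℝ) < v := by linarith
  have hkv : Real.sqrt k ≤ v := by
    rw [hv]
    exact Real.sqrt_le_sqrt (by linarith)
  have hknn : (0:ℝ) ≤ Real.sqrt k := Real.sqrt_nonneg _
  have hv2u : v ≤ 2*u := by nlinarith
  have e1 : (a + (k:ℝ))⁻¹ - (a + (k:ℝ) + 1)⁻¹ = 1/(u^2*v^2) := by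
    rw [delta_eq a ha k, ← hv2, ← hu2, one_div]
  have e2 : u⁻¹ - v⁻¹ = (v - u)/(u*v) := by
    field_simp
  have hvu : (v - u)*(v + u) = 1 := by nlinarith
  rw [e1, e2, mul_one_div, ← mul_div_assoc]
  rw [div_le_div_iff₀ (by positivity) (by positivity)]
  have key : Real.sqrt k * (u*v) * (v+u) ≤ 3*u^2*v^2 := by
    nlinarith [mul_le_mul_of_nonneg_right hkv
        (le_of_lt (mul_pos (mul_pos hupos hvpos) (by linarith : (0:ℝ) < v + u))),
      mul_le_mul_of_nonneg_right hv2u (by positivity : (0:ℝ) ≤ u*v^2),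
      mul_pos hupos hvpos]
  have h7 : 3*(v-u)*(u^2*v^2)*(v+u) = 3*u^2*v^2 := by
    linear_combination (3*u^2*v^2)*hvu
  have h8 : Real.sqrt k * (u*v) * (v+u) ≤ (3*(v-u)*(u^2*v^2))*(v+u) := by linarith
  exact le_of_mul_le_mul_right h8 (by linarith : (0:ℝ) < v+u)

lemma sqrt_delta_sum (a : ℝ) (ha : 1 ≤ a) (M : ℕ) :
    ∑ k ∈ range M, Real.sqrt k * ((a + (k:ℝ))⁻¹ - (a + (k:ℝ) + 1)⁻¹) ≤ 3 / Real.sqrt a := by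
  have ha0 : (0:ℝ) < a := by linarith
  have hsa : (0:ℝ) < Real.sqrt a := Real.sqrt_pos.mpr ha0
  have h1 : ∑ k ∈ range M, Real.sqrt k * ((a + (k:ℝ))⁻¹ - (a + (k:ℝ) + 1)⁻¹)
      ≤ ∑ k ∈ range M, 3 * ((Real.sqrt (a + (k:ℝ)))⁻¹ - (Real.sqrt (a + (k:ℝ) + 1))⁻¹) :=
    Finset.sum_le_sum fun k _ => sqrt_term_le a ha k
  have h2 : ∑ k ∈ range M, ((Real.sqrt (a + (k:ℝ)))⁻¹ - (Real.sqrt (a + (k:ℝ) + 1))⁻¹)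
      = (Real.sqrt a)⁻¹ - (Real.sqrt (a + (M:ℝ)))⁻¹ := by
    have h := Finset.sum_range_sub' (f := fun k : ℕ => (Real.sqrt (a + (k:ℝ)))⁻¹) M
    simp only [Nat.cast_zero, add_zero] at h
    rw [← h]
    refine Finset.sum_congr rfl fun k _ => ?_
    push_cast
    ring_nf
  rw [← Finset.mul_sum, h2] at h1
  have h3 : (0:ℝ) ≤ (Real.sqrt (a + (M:ℝ)))⁻¹ := by positivity
  have h4 : 3/Real.sqrt a = 3 * (Real.sqrt a)⁻¹ := by ring
  linarith

lemma delta_sum (a : ℝ) (M : ℕ) :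
    ∑ k ∈ range M, ((a + (k:ℝ))⁻¹ - (a + (k:ℝ) + 1)⁻¹) = a⁻¹ - (a + (M:ℝ))⁻¹ := by
  have h := Finset.sum_range_sub' (f := fun k : ℕ => (a + (k:ℝ))⁻¹) M
  simp only [Nat.cast_zero, add_zero] at h
  rw [← h]
  refine Finset.sum_congr rfl fun k _ => ?_
  push_cast
  ring_nf

lemma disk_zero : disk 0 = {((0:ℤ),(0:ℤ))} := by
  ext n
  simp only [mem_disk, Finset.mem_singleton, Nat.cast_zero]
  constructor
  · intro h
    have h1 : n.1 = 0 := by nlinarith [sq_nonneg n.1, sq_nonneg n.2]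
    have h2 : n.2 = 0 := by nlinarith [sq_nonneg n.1, sq_nonneg n.2]
    exact Prod.ext h1 h2
  · intro h
    rw [h]
    norm_num

lemma E_bound (k : ℕ) : |((disk k).card : ℝ) - π * k| ≤ 20 * Real.sqrt k + 20 := by
  rcases Nat.eq_zero_or_pos k with hk | hk
  · subst hk
    rw [disk_zero]
    simp only [Finset.card_singleton, Nat.cast_one, Nat.cast_zero, mul_zero, sub_zero,
      Real.sqrt_zero]
    norm_num
  · have h := gauss k hk
    have h2 : (0:ℝ) ≤ Real.sqrt k := Real.sqrt_nonneg _
    linarith [abs_nonneg (((disk k).card : ℝ) - π * k)]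

lemma abel_inv (a : ℝ) (c : ℕ → ℝ) (M : ℕ) :
    ∑ k ∈ range (M+1), c k * (a + (k:ℝ))⁻¹
      = (∑ i ∈ range (M+1), c i) * (a + (M:ℝ))⁻¹
        + ∑ k ∈ range M, (∑ i ∈ range (k+1), c i) * ((a + (k:ℝ))⁻¹ - (a + (k:ℝ) + 1)⁻¹) := by
  induction M with
  | zero => simp
  | succ M ih =>
    rw [Finset.sum_range_succ (fun k => c k * (a + (k:ℝ))⁻¹) (M+1), ih,
      Finset.sum_range_succ
        (fun k => (∑ i ∈ range (k+1), c i) * ((a + (k:ℝ))⁻¹ - (a + (k:ℝ)+1)⁻¹)) M,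
      Finset.sum_range_succ c (M+1)]
    push_cast
    ring

lemma tele_inv (a : ℝ) (M : ℕ) :
    (M:ℝ) * (a + (M:ℝ))⁻¹ + ∑ k ∈ range M, (k:ℝ) * ((a + (k:ℝ))⁻¹ - (a + (k:ℝ)+1)⁻¹)
      = ∑ k ∈ range M, (a + (k:ℝ) + 1)⁻¹ := by
  induction M with
  | zero => simp
  | succ M ih =>
    rw [Finset.sum_range_succ (fun k => (k:ℝ) * ((a + (k:ℝ))⁻¹ - (a + (k:ℝ)+1)⁻¹)) M,
      Finset.sum_range_succ (fun k => (a + (k:ℝ) + 1)⁻¹) M, ← ih]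
    push_cast
    ring

lemma main_est (a : ℝ) (ha : 1 ≤ a) (M : ℕ) :
    |(∑ k ∈ range (M+1), ((shell k).card : ℝ) * (a + (k:ℝ))⁻¹)
      - π * (Real.log (a + (M:ℝ)) - Real.log a)|
      ≤ 20*((Real.sqrt (M:ℝ) + 1) * (a + (M:ℝ))⁻¹
            + (∑ k ∈ range M, Real.sqrt (k:ℝ) * ((a+(k:ℝ))⁻¹ - (a+(k:ℝ)+1)⁻¹))
            + (a⁻¹ - (a+(M:ℝ))⁻¹))
        + 4 * (1/a) := by
  have ha0 : (0:ℝ) < a := by linarith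
  have hΔnn : ∀ k : ℕ, (0:ℝ) ≤ (a+(k:ℝ))⁻¹ - (a+(k:ℝ)+1)⁻¹ := by
    intro k
    have hk0 : (0:ℝ) ≤ (k:ℝ) := Nat.cast_nonneg k
    have h1 : (0:ℝ) < a + k := by linarith
    have h2 := inv_anti₀ h1 (by linarith : a + (k:ℝ) ≤ a + (k:ℝ) + 1)
    linarith
  have hNsum : ∀ k : ℕ, ∑ i ∈ range (k+1), ((shell i).card : ℝ) = ((disk k).card : ℝ) := by
    intro k; rw [disk_card k]; push_cast; rfl
  have habel := abel_inv a (fun i => ((shell i).card : ℝ)) M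
  simp only [hNsum] at habel
  have htele := tele_inv a M
  have hexp : ∑ k ∈ range M, (((disk k).card : ℝ) - π*(k:ℝ))*((a+(k:ℝ))⁻¹ - (a+(k:ℝ)+1)⁻¹)
      = (∑ k ∈ range M, ((disk k).card : ℝ)*((a+(k:ℝ))⁻¹ - (a+(k:ℝ)+1)⁻¹))
        - π*(∑ k ∈ range M, (k:ℝ)*((a+(k:ℝ))⁻¹ - (a+(k:ℝ)+1)⁻¹)) := by
    rw [Finset.mul_sum, ← Finset.sum_sub_distrib]
    exact Finset.sum_congr rfl fun k _ => by ring
  have hXeq : (∑ k ∈ range (M+1), ((shell k).card : ℝ) * (a + (k:ℝ))⁻¹)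
      - π * (∑ k ∈ range M, (a + (k:ℝ) + 1)⁻¹)
      = (((disk M).card:ℝ) - π*(M:ℝ)) * (a + (M:ℝ))⁻¹
        + ∑ k ∈ range M, (((disk k).card : ℝ) - π*(k:ℝ))*((a+(k:ℝ))⁻¹ - (a+(k:ℝ)+1)⁻¹) := by
    rw [habel, hexp, ← htele]
    ring
  have hfMnn : (0:ℝ) ≤ (a + (M:ℝ))⁻¹ := by positivity
  have hub1 : |(((disk M).card:ℝ) - π*(M:ℝ)) * (a + (M:ℝ))⁻¹|
      ≤ (20*Real.sqrt (M:ℝ) + 20) * (a + (M:ℝ))⁻¹ := by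
    rw [abs_mul, abs_of_nonneg hfMnn]
    exact mul_le_mul_of_nonneg_right (E_bound M) hfMnn
  have hub2 : |∑ k ∈ range M, (((disk k).card : ℝ) - π*(k:ℝ))*((a+(k:ℝ))⁻¹ - (a+(k:ℝ)+1)⁻¹)|
      ≤ ∑ k ∈ range M, (20*Real.sqrt (k:ℝ) + 20) * ((a+(k:ℝ))⁻¹ - (a+(k:ℝ)+1)⁻¹) := by
    refine (Finset.abs_sum_le_sum_abs _ _).trans (Finset.sum_le_sum fun k _ => ?_)
    rw [abs_mul, abs_of_nonneg (hΔnn k)]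
    exact mul_le_mul_of_nonneg_right (E_bound k) (hΔnn k)
  have hsplit : ∑ k ∈ range M, (20*Real.sqrt (k:ℝ) + 20) * ((a+(k:ℝ))⁻¹ - (a+(k:ℝ)+1)⁻¹)
      = 20*(∑ k ∈ range M, Real.sqrt (k:ℝ) * ((a+(k:ℝ))⁻¹ - (a+(k:ℝ)+1)⁻¹))
        + 20*(a⁻¹ - (a+(M:ℝ))⁻¹) := by
    rw [← delta_sum a M, Finset.mul_sum, Finset.mul_sum, ← Finset.sum_add_distrib]
    exact Finset.sum_congr rfl fun k _ => by ring
  have hharm := harmonic_log a ha M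
  have hpi4 := Real.pi_le_four
  have hpi0 := Real.pi_pos
  have htri : |(∑ k ∈ range (M+1), ((shell k).card : ℝ) * (a + (k:ℝ))⁻¹)
        - π * (Real.log (a + (M:ℝ)) - Real.log a)|
      ≤ |(∑ k ∈ range (M+1), ((shell k).card : ℝ) * (a + (k:ℝ))⁻¹)
          - π * (∑ k ∈ range M, (a + (k:ℝ) + 1)⁻¹)|
        + π * |(∑ k ∈ range M, (a + (k:ℝ) + 1)⁻¹) - (Real.log (a + (M:ℝ)) - Real.log a)| := by
    have he : (∑ k ∈ range (M+1), ((shell k).card : ℝ) * (a + (k:ℝ))⁻¹)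
        - π * (Real.log (a + (M:ℝ)) - Real.log a)
        = ((∑ k ∈ range (M+1), ((shell k).card : ℝ) * (a + (k:ℝ))⁻¹)
            - π * (∑ k ∈ range M, (a + (k:ℝ) + 1)⁻¹))
          + π * ((∑ k ∈ range M, (a + (k:ℝ) + 1)⁻¹) - (Real.log (a + (M:ℝ)) - Real.log a)) := by
      ring
    rw [he]
    refine (abs_add_le _ _).trans ?_
    rw [abs_mul, abs_of_pos hpi0]
  have hXb : |(∑ k ∈ range (M+1), ((shell k).card : ℝ) * (a + (k:ℝ))⁻¹)
        - π * (∑ k ∈ range M, (a + (k:ℝ) + 1)⁻¹)|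
      ≤ (20*Real.sqrt (M:ℝ) + 20) * (a + (M:ℝ))⁻¹
        + (20*(∑ k ∈ range M, Real.sqrt (k:ℝ) * ((a+(k:ℝ))⁻¹ - (a+(k:ℝ)+1)⁻¹))
          + 20*(a⁻¹ - (a+(M:ℝ))⁻¹)) := by
    rw [hXeq]
    refine (abs_add_le _ _).trans ?_
    rw [← hsplit]
    exact add_le_add hub1 hub2
  have he2 : (20*Real.sqrt (M:ℝ) + 20) * (a + (M:ℝ))⁻¹
      = 20*((Real.sqrt (M:ℝ) + 1) * (a + (M:ℝ))⁻¹) := by ring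
  have hp : π * |(∑ k ∈ range M, (a + (k:ℝ) + 1)⁻¹) - (Real.log (a + (M:ℝ)) - Real.log a)|
      ≤ 4 * (1/a) := by
    have h1 := abs_nonneg ((∑ k ∈ range M, (a + (k:ℝ) + 1)⁻¹)
      - (Real.log (a + (M:ℝ)) - Real.log a))
    nlinarith
  linarith [htri, hXb, hp, he2]

end LatticeAux

set_option maxHeartbeats 2000000 in
open LatticeAux in
/-- Lemma 2.2 / `LEM:HRW`: there is a constant `C > 0` such that
for all reals `a, R ≥ 1`,
`|∑_{n ∈ ℤ², |n| ≤ R} 1/(a + |n|²) − π log(1 + R²/a)| ≤ (C/√a) · min(1, R/√a)`. -/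
theorem lattice_sum_log_asymptotics :
    ∃ C : ℝ, 0 < C ∧ ∀ a R : ℝ, 1 ≤ a → 1 ≤ R →
      |(∑' n : ℤ × ℤ,
            if Real.sqrt ((n.1 : ℝ) ^ 2 + (n.2 : ℝ) ^ 2) ≤ R
            then (a + ((n.1 : ℝ) ^ 2 + (n.2 : ℝ) ^ 2))⁻¹ else 0)
          - π * Real.log (1 + R ^ 2 / a)|
        ≤ C / Real.sqrt a * min 1 (R / Real.sqrt a) := by
  refine ⟨200, by norm_num, fun a R ha hR => ?_⟩
  have ha0 : (0:ℝ) < a := by linarith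
  have hR0 : (0:ℝ) < R := by linarith
  have hsa : (0:ℝ) < Real.sqrt a := Real.sqrt_pos.mpr ha0
  have hsa2 : (Real.sqrt a)^2 = a := Real.sq_sqrt (le_of_lt ha0)
  have hsa1 : (1:ℝ) ≤ Real.sqrt a := by
    rw [show (1:ℝ) = Real.sqrt 1 by simp]; exact Real.sqrt_le_sqrt ha
  have hainv : a⁻¹ ≤ (Real.sqrt a)⁻¹ := by
    apply inv_anti₀ hsa
    nlinarith
  have hR2 : (1:ℝ) ≤ R^2 := by nlinarith
  obtain ⟨M, hM1, hMle, hMgt⟩ : ∃ M : ℕ, 1 ≤ M ∧ (M:ℝ) ≤ R^2 ∧ R^2 < (M:ℝ) + 1 :=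
    ⟨Nat.floor (R^2), Nat.le_floor (by exact_mod_cast hR2),
      Nat.floor_le (by positivity), Nat.lt_floor_add_one _⟩
  have hMr1 : (1:ℝ) ≤ (M:ℝ) := by exact_mod_cast hM1
  have haM : (0:ℝ) < a + M := by linarith
  have hsM : (0:ℝ) ≤ Real.sqrt (M:ℝ) := Real.sqrt_nonneg _
  have hsM2 : (Real.sqrt (M:ℝ))^2 = (M:ℝ) := Real.sq_sqrt (by linarith)
  have hsMR : Real.sqrt (M:ℝ) ≤ R := by
    rw [show R = Real.sqrt (R^2) by rw [Real.sqrt_sq (le_of_lt hR0)]]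
    exact Real.sqrt_le_sqrt hMle
  -- condition equivalence
  have hcond : ∀ n : ℤ × ℤ, (Real.sqrt ((n.1:ℝ)^2 + (n.2:ℝ)^2) ≤ R ↔ n ∈ disk M) := by
    intro n
    rw [mem_disk]
    constructor
    · intro h
      have h0 : (0:ℝ) ≤ (n.1:ℝ)^2 + (n.2:ℝ)^2 := by positivity
      have hs := Real.sq_sqrt h0
      have h1 : (n.1:ℝ)^2 + (n.2:ℝ)^2 ≤ R^2 := by
        nlinarith [Real.sqrt_nonneg ((n.1:ℝ)^2 + (n.2:ℝ)^2)]
      have h2 : ((n.1^2 + n.2^2 : ℤ) : ℝ) ≤ R^2 := by push_cast; linarith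
      have h3 : (n.1^2+n.2^2).toNat ≤ M := by
        have h4 : (((n.1^2+n.2^2).toNat : ℤ) : ℝ) ≤ R^2 := by
          rw [Int.toNat_of_nonneg (by positivity)]
          exact h2
        have h5 : (((n.1^2+n.2^2).toNat : ℕ) : ℝ) < (M:ℝ) + 1 := by
          push_cast at h4 ⊢
          linarith
        have h6 : (n.1^2+n.2^2).toNat < M + 1 := by exact_mod_cast h5
        omega
      have h5 : (0:ℤ) ≤ n.1^2+n.2^2 := by positivity
      omega
    · intro h
      have h1 : ((n.1^2+n.2^2 : ℤ):ℝ) ≤ (M:ℝ) := by exact_mod_cast h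
      push_cast at h1
      have h2 : (n.1:ℝ)^2 + (n.2:ℝ)^2 ≤ R^2 := by linarith
      have h3 : Real.sqrt ((n.1:ℝ)^2+(n.2:ℝ)^2) ≤ Real.sqrt (R^2) := Real.sqrt_le_sqrt h2
      rwa [Real.sqrt_sq (le_of_lt hR0)] at h3
  -- tsum to finite sum
  have htsum : (∑' n : ℤ × ℤ,
        if Real.sqrt ((n.1 : ℝ) ^ 2 + (n.2 : ℝ) ^ 2) ≤ R
        then (a + ((n.1 : ℝ) ^ 2 + (n.2 : ℝ) ^ 2))⁻¹ else 0)
      = ∑ n ∈ disk M, (a + ((n.1:ℝ)^2+(n.2:ℝ)^2))⁻¹ := by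
    rw [tsum_eq_sum (s := disk M) (fun n hn => if_neg (fun hc => hn ((hcond n).mp hc)))]
    exact Finset.sum_congr rfl fun n hn => if_pos ((hcond n).mpr hn)
  -- fiberwise to shells
  have hmaps : ∀ n ∈ disk M, (n.1^2+n.2^2).toNat ∈ range (M+1) := by
    intro n hn
    have h := mem_disk.mp hn
    have h0 : (0:ℤ) ≤ n.1^2+n.2^2 := by positivity
    simp only [Finset.mem_range]
    omega
  have hfib := Finset.sum_fiberwise_of_maps_to hmaps
    (fun n : ℤ×ℤ => (a + ((n.1:ℝ)^2+(n.2:ℝ)^2))⁻¹)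
  have hshellsum : ∑ n ∈ disk M, (a + ((n.1:ℝ)^2+(n.2:ℝ)^2))⁻¹
      = ∑ k ∈ range (M+1), ((shell k).card : ℝ) * (a + (k:ℝ))⁻¹ := by
    rw [← hfib]
    refine Finset.sum_congr rfl fun k hk => ?_
    rw [disk_fiber (Nat.lt_succ_iff.mp (Finset.mem_range.mp hk))]
    have hcongr : ∀ n ∈ shell k, (a + ((n.1:ℝ)^2+(n.2:ℝ)^2))⁻¹ = (a + (k:ℝ))⁻¹ := by
      intro n hn
      have h := mem_shell.mp hn
      have h2 := congrArg (fun z : ℤ => (z:ℝ)) h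
      push_cast at h2
      rw [h2]
    rw [Finset.sum_congr rfl hcongr, Finset.sum_const, nsmul_eq_mul]
  -- log identities
  have hlogeq : Real.log (1 + R^2/a) = Real.log (a + R^2) - Real.log a := by
    rw [show 1 + R^2/a = (a + R^2)/a by field_simp]
    rw [Real.log_div (by positivity) (ne_of_gt ha0)]
  have hle : a + (M:ℝ) ≤ a + R^2 := by linarith
  have hflow := le_log_diff (x := a + (M:ℝ)) (y := a + R^2) haM hle
  have hfup := log_diff_le (x := a + (M:ℝ)) (y := a + R^2) haM hle
  have hfl1 : 0 ≤ Real.log (a+R^2) - Real.log (a+(M:ℝ)) := by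
    refine le_trans ?_ hflow
    apply div_nonneg (by linarith) (by positivity)
  have hfl2 : Real.log (a+R^2) - Real.log (a+(M:ℝ)) ≤ 1/a := by
    refine hfup.trans ?_
    rw [div_le_div_iff₀ haM ha0]
    nlinarith
  -- main estimate
  have hme := main_est a ha M
  -- triangle to final quantity
  have htri : |(∑ k ∈ range (M+1), ((shell k).card : ℝ) * (a + (k:ℝ))⁻¹)
        - π * Real.log (1 + R^2/a)|
      ≤ 20*((Real.sqrt (M:ℝ) + 1) * (a + (M:ℝ))⁻¹
            + (∑ k ∈ range M, Real.sqrt (k:ℝ) * ((a+(k:ℝ))⁻¹ - (a+(k:ℝ)+1)⁻¹))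
            + (a⁻¹ - (a+(M:ℝ))⁻¹))
        + 4 * (1/a) + 4 * (1/a) := by
    have he : (∑ k ∈ range (M+1), ((shell k).card : ℝ) * (a + (k:ℝ))⁻¹)
        - π * Real.log (1 + R^2/a)
        = ((∑ k ∈ range (M+1), ((shell k).card : ℝ) * (a + (k:ℝ))⁻¹)
            - π * (Real.log (a + (M:ℝ)) - Real.log a))
          - π * (Real.log (a+R^2) - Real.log (a+(M:ℝ))) := by
      rw [hlogeq]; ring
    rw [he]
    refine (abs_sub _ _).trans ?_
    have hpi0 := Real.pi_pos
    have hpi4 := Real.pi_le_four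
    have h2 : |π * (Real.log (a+R^2) - Real.log (a+(M:ℝ)))| ≤ 4 * (1/a) := by
      rw [abs_mul, abs_of_pos hpi0, abs_of_nonneg hfl1]
      nlinarith
    linarith [hme]
  rw [htsum, hshellsum]
  -- now bound B depending on regime
  have hB2gen := sqrt_delta_sum a ha M
  have hB1a : Real.sqrt (M:ℝ) * (a + (M:ℝ))⁻¹ ≤ 1/(2*Real.sqrt a) := by
    rw [show Real.sqrt (M:ℝ) * (a + (M:ℝ))⁻¹ = Real.sqrt (M:ℝ) / (a + (M:ℝ)) by ring]
    rw [div_le_div_iff₀ haM (by positivity)]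
    nlinarith [sq_nonneg (Real.sqrt a - Real.sqrt (M:ℝ))]
  have hB1b : (a + (M:ℝ))⁻¹ ≤ (Real.sqrt a)⁻¹ := by
    refine le_trans ?_ hainv
    apply inv_anti₀ ha0
    linarith
  have haMinv : (0:ℝ) ≤ (a + (M:ℝ))⁻¹ := by positivity
  have hB3 : a⁻¹ - (a+(M:ℝ))⁻¹ ≤ (Real.sqrt a)⁻¹ := by linarith
  have h1a : 1/a ≤ (Real.sqrt a)⁻¹ := by
    rw [one_div]; exact hainv
  have hhalf : 1/(2*Real.sqrt a) ≤ (Real.sqrt a)⁻¹ := by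
    rw [one_div]
    apply inv_anti₀ hsa
    linarith
  have hB1a' : Real.sqrt (M:ℝ) * (a + (M:ℝ))⁻¹ ≤ (Real.sqrt a)⁻¹ := hB1a.trans hhalf
  have hB2gen' : (∑ k ∈ range M, Real.sqrt (k:ℝ) * ((a+(k:ℝ))⁻¹ - (a+(k:ℝ)+1)⁻¹))
      ≤ 3 * (Real.sqrt a)⁻¹ := by
    rw [← div_eq_mul_inv]
    exact hB2gen
  rcases le_total (R / Real.sqrt a) 1 with hreg | hreg
  · -- R ≤ sqrt a
    rw [min_eq_right hreg]
    have hRa : R ≤ Real.sqrt a := by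
      rw [div_le_one hsa] at hreg; exact hreg
    have hR2a : R^2 ≤ a := by nlinarith
    have hrhs : 200 / Real.sqrt a * (R / Real.sqrt a) = 200 * (R / a) := by
      rw [div_mul_div_comm, mul_div_assoc]
      congr 2
      nlinarith [hsa2]
    rw [hrhs]
    -- bounds
    have hb1 : (Real.sqrt (M:ℝ) + 1) * (a + (M:ℝ))⁻¹ ≤ 2*(R/a) := by
      have h1 : (Real.sqrt (M:ℝ) + 1) ≤ 2*R := by linarith
      have h2 : (a + (M:ℝ))⁻¹ ≤ a⁻¹ := by
        apply inv_anti₀ ha0; linarith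
      have h3 := mul_le_mul h1 h2 haMinv (by linarith : (0:ℝ) ≤ 2*R)
      rw [show 2*(R/a) = (2*R)*a⁻¹ by rw [div_eq_mul_inv]; ring]
      exact h3
    have hb2 : (∑ k ∈ range M, Real.sqrt (k:ℝ) * ((a+(k:ℝ))⁻¹ - (a+(k:ℝ)+1)⁻¹)) ≤ R/a := by
      have hterm : ∀ k ∈ range M, Real.sqrt (k:ℝ) * ((a+(k:ℝ))⁻¹ - (a+(k:ℝ)+1)⁻¹)
          ≤ R * (a*a)⁻¹ := by
        intro k hk
        have hkM : (k:ℝ) ≤ (M:ℝ) := by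
          have := Finset.mem_range.mp hk; exact_mod_cast this.le
        have hks : Real.sqrt (k:ℝ) ≤ R := by
          refine le_trans (Real.sqrt_le_sqrt hkM) ?_
          exact hsMR
        have hk0 : (0:ℝ) ≤ (k:ℝ) := Nat.cast_nonneg k
        have hd := delta_eq a ha k
        have hdle : (a+(k:ℝ))⁻¹ - (a+(k:ℝ)+1)⁻¹ ≤ (a*a)⁻¹ := by
          rw [hd]
          apply inv_anti₀ (by positivity)
          nlinarith
        have hdnn : (0:ℝ) ≤ (a+(k:ℝ))⁻¹ - (a+(k:ℝ)+1)⁻¹ := by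
          rw [hd]; positivity
        have := mul_le_mul hks hdle hdnn (by linarith : (0:ℝ) ≤ R)
        exact this.trans_eq rfl
      have hsum := Finset.sum_le_card_nsmul (range M) _ _ hterm
      rw [Finset.card_range, nsmul_eq_mul] at hsum
      refine hsum.trans ?_
      have haainv : (0:ℝ) ≤ (a*a)⁻¹ := by positivity
      have h1 : (M:ℝ) * (R * (a*a)⁻¹) = ((M:ℝ)*R) * (a*a)⁻¹ := by ring
      have h2 : R/a = (a*R) * (a*a)⁻¹ := by
        field_simp
      rw [h1, h2]
      apply mul_le_mul_of_nonneg_right _ haainv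
      nlinarith
    have hb3 : a⁻¹ - (a+(M:ℝ))⁻¹ ≤ R/a := by
      have : a⁻¹ ≤ R/a := by
        rw [div_eq_mul_inv]
        nlinarith [inv_pos.mpr ha0]
      linarith
    have h4a : 4*(1/a) ≤ 4*(R/a) := by
      have h5 : 1/a ≤ R/a := by
        rw [div_le_div_iff₀ ha0 ha0]
        nlinarith
      linarith
    have hb0 : (0:ℝ) ≤ R/a := by positivity
    refine htri.trans ?_
    linarith [hb1, hb2, hb3, h4a, hb0]
  · -- sqrt a ≤ R
    rw [min_eq_left hreg]
    refine htri.trans ?_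
    have hsainv : (0:ℝ) < (Real.sqrt a)⁻¹ := by positivity
    have hrhs : 200 / Real.sqrt a * 1 = 200 * (Real.sqrt a)⁻¹ := by
      rw [mul_one, div_eq_mul_inv]
    rw [hrhs]
    linarith [hB2gen', hB1a', hB1b, hB3, h1a, hsainv]
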